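/- Every HGCRP instance has a partition of the agents that is simultaneously Pareto optimal, core stable, and individually stable. -/

import Mathlib

/-- A partition of the agents of type `α`, given as the map sending each agent to her
coalition: every agent belongs to her own coalition, and the coalitions are consistent. -/
def IsPartitionFn {α : Type*} [DecidableEq α] (C : α → Finset α) : Prop :=
  (∀ i, i ∈ C i) ∧ ∀ i j, i ∈ C j → C i = C j

/-- The social welfare of a partition: the sum of the agents' utilities. -/
noncomputable def welfare {α : Type*} [Fintype α] (U : Finset α → ℝ) (C : α → Finset α) : ℝ :=
  ∑ i, U (C i)

/-- `C'` Pareto dominates `C`. -/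
def ParetoDominates {α : Type*} (U : Finset α → ℝ) (C C' : α → Finset α) : Prop :=
  (∀ i, U (C i) ≤ U (C' i)) ∧ ∃ i, U (C i) < U (C' i)

/-- No partition Pareto dominates `C`. -/
def ParetoOptimal {α : Type*} [DecidableEq α] (U : Finset α → ℝ) (C : α → Finset α) : Prop :=
  ¬ ∃ C', IsPartitionFn C' ∧ ParetoDominates U C C'

/-- No nonempty coalition blocks `C`. -/
def CoreStable {α : Type*} (U : Finset α → ℝ) (C : α → Finset α) : Prop :=
  ¬ ∃ S : Finset α, S.Nonempty ∧ ∀ i ∈ S, U (C i) < U S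

/-- No agent can beneficially move to an existing (possibly empty) coalition without
making the members of that coalition worse off. -/
def IndividuallyStable {α : Type*} [DecidableEq α] (U : Finset α → ℝ) (C : α → Finset α) : Prop :=
  ¬ ∃ i T, i ∉ T ∧ (T = ∅ ∨ ((∃ j, C j = T) ∧ U T ≤ U (insert i T))) ∧
    U (C i) < U (insert i T)

/-- No agent can beneficially move to an existing (possibly empty) coalition. -/
def NashStable {α : Type*} [DecidableEq α] (U : Finset α → ℝ) (C : α → Finset α) : Prop :=
  ¬ ∃ i T, i ∉ T ∧ (T = ∅ ∨ ∃ j, C j = T) ∧ U (C i) < U (insert i T)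

/-- The sequence of the agents' utilities in partition `C`, sorted in non-increasing order. -/
noncomputable def psi {α : Type*} [Fintype α] (U : Finset α → ℝ) (C : α → Finset α) : List ℝ :=
  (Finset.univ.val.map fun i => U (C i)).sort (· ≥ ·)

open Finset in
/-- Key lemma: if changing utilities from `f` to `g` doesn't hurt any agent whose
utility is at least `v`, and strictly helps some agent past threshold `v`, the
exponential potential strictly increases. -/
lemma key_lemma {α : Type*} [Fintype α] [Nonempty α] (V : Finset ℝ)
    (f g : α → ℝ) (v : ℝ) (hv : v ∈ V)
    (h1 : ∀ j, v ≤ f j → f j ≤ g j) (j0 : α) (h2a : f j0 < v) (h2b : v ≤ g j0) :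
    ∑ j, (Fintype.card α + 1) ^ ((V.filter (· ≤ f j)).card)
      < ∑ j, (Fintype.card α + 1) ^ ((V.filter (· ≤ g j)).card) := by
  classical
  set n := Fintype.card α with hn
  set r : ℝ → ℕ := fun x => (V.filter (· ≤ x)).card with hr
  have rmono : ∀ {x y : ℝ}, x ≤ y → r x ≤ r y := by
    intro x y hxy
    apply Finset.card_le_card
    intro z hz
    simp only [mem_filter] at hz ⊢
    exact ⟨hz.1, hz.2.trans hxy⟩
  have rlt : ∀ {x : ℝ}, x < v → r x < r v := by
    intro x hxv
    apply Finset.card_lt_card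
    constructor
    · intro z hz
      simp only [mem_filter] at hz ⊢
      exact ⟨hz.1, hz.2.trans hxv.le⟩
    · intro hsub
      have := hsub (by simp [hv] : v ∈ V.filter (· ≤ v))
      simp only [mem_filter] at this
      exact absurd this.2 (not_le.mpr hxv)
  have hrv : 1 ≤ r v := Finset.card_pos.mpr ⟨v, by simp [hv]⟩
  set A : Finset α := Finset.univ.filter fun j => v ≤ f j with hA
  set B : Finset α := Finset.univ.filter fun j => ¬ v ≤ f j with hB
  have hsplit : ∀ h : α → ℝ,
      ∑ j, (n + 1) ^ r (h j)
        = (∑ j ∈ A, (n + 1) ^ r (h j)) + ∑ j ∈ B, (n + 1) ^ r (h j) :=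
    fun h => (Finset.sum_filter_add_sum_filter_not Finset.univ (fun j => v ≤ f j)
      (fun j => (n + 1) ^ r (h j))).symm
  have hApart : ∑ j ∈ A, (n + 1) ^ r (f j) ≤ ∑ j ∈ A, (n + 1) ^ r (g j) := by
    apply Finset.sum_le_sum
    intro j hj
    have hj' : v ≤ f j := (Finset.mem_filter.mp hj).2
    exact Nat.pow_le_pow_right (Nat.succ_le_succ (Nat.zero_le n)) (rmono (h1 j hj'))
  have hBpart : ∑ j ∈ B, (n + 1) ^ r (f j) < ∑ j ∈ B, (n + 1) ^ r (g j) := by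
    have hj0B : j0 ∈ B := by
      simp only [hB, Finset.mem_filter, Finset.mem_univ, true_and]
      exact not_le.mpr h2a
    have hub : ∑ j ∈ B, (n + 1) ^ r (f j) ≤ (B).card * (n + 1) ^ (r v - 1) := by
      calc ∑ j ∈ B, (n + 1) ^ r (f j)
          ≤ ∑ _j ∈ B, (n + 1) ^ (r v - 1) := by
            apply Finset.sum_le_sum
            intro j hj
            have hjv : f j < v := by
              simp only [hB, Finset.mem_filter, Finset.mem_univ, true_and, not_le] at hj
              exact hj
            exact Nat.pow_le_pow_right (Nat.succ_le_succ (Nat.zero_le n))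
              (Nat.le_sub_one_of_lt (rlt hjv))
        _ = (B).card * (n + 1) ^ (r v - 1) := by rw [Finset.sum_const, smul_eq_mul]
    have hlt : (B).card * (n + 1) ^ (r v - 1) < (n + 1) ^ r v := by
      have hcard : (B).card ≤ n := by
        rw [hn]
        exact Finset.card_le_univ _
      calc (B).card * (n + 1) ^ (r v - 1)
          ≤ n * (n + 1) ^ (r v - 1) := Nat.mul_le_mul_right _ hcard
        _ < (n + 1) * (n + 1) ^ (r v - 1) := by
            have hpos : 0 < (n + 1) ^ (r v - 1) := Nat.pow_pos (Nat.succ_pos n)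
            exact (Nat.mul_lt_mul_right hpos).mpr (Nat.lt_succ_self n)
        _ = (n + 1) ^ (r v - 1 + 1) := (pow_succ' _ _).symm
        _ = (n + 1) ^ r v := by rw [Nat.sub_add_cancel hrv]
    have hge : (n + 1) ^ r v ≤ ∑ j ∈ B, (n + 1) ^ r (g j) := by
      calc (n + 1) ^ r v ≤ (n + 1) ^ r (g j0) :=
            Nat.pow_le_pow_right (Nat.succ_le_succ (Nat.zero_le n)) (rmono h2b)
        _ ≤ ∑ j ∈ B, (n + 1) ^ r (g j) :=
            Finset.single_le_sum (f := fun j => (n + 1) ^ r (g j))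
              (fun j _ => Nat.zero_le _) hj0B
    exact lt_of_le_of_lt hub (lt_of_lt_of_le hlt hge)
  calc ∑ j, (n + 1) ^ r (f j)
      = (∑ j ∈ A, (n + 1) ^ r (f j)) + ∑ j ∈ B, (n + 1) ^ r (f j) := hsplit f
    _ < (∑ j ∈ A, (n + 1) ^ r (g j)) + ∑ j ∈ B, (n + 1) ^ r (g j) :=
        Nat.add_lt_add_of_le_of_lt hApart hBpart
    _ = ∑ j, (n + 1) ^ r (g j) := (hsplit g).symm

/-- Every HGCRP instance has a partition that is simultaneously Pareto optimal,
core stable and individually stable. -/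
theorem stmt3 {α : Type*} [Fintype α] [DecidableEq α] [Nonempty α]
    (U : Finset α → ℝ) (hU : ∀ S : Finset α, 0 ≤ U S) :
    ∃ C : α → Finset α, IsPartitionFn C ∧
      ParetoOptimal U C ∧ CoreStable U C ∧ IndividuallyStable U C := by
  classical
  set V : Finset ℝ := (Finset.univ : Finset (Finset α)).image U with hV
  set Φ : (α → Finset α) → ℕ :=
    fun C => ∑ j, (Fintype.card α + 1) ^ ((V.filter (· ≤ U (C j))).card) with hΦ
  have hPartNe : ∃ C : α → Finset α, IsPartitionFn C :=
    ⟨fun _ => Finset.univ, fun i => Finset.mem_univ i, fun _ _ _ => rfl⟩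
  obtain ⟨C, hC, hmax⟩ : ∃ C, IsPartitionFn C ∧ ∀ C', IsPartitionFn C' → Φ C' ≤ Φ C := by
    obtain ⟨C, hCmem, hm⟩ := Finset.exists_max_image
      (Finset.univ.filter fun C : α → Finset α => IsPartitionFn C) Φ
      (by
        obtain ⟨C0, h0⟩ := hPartNe
        exact ⟨C0, Finset.mem_filter.mpr ⟨Finset.mem_univ _, h0⟩⟩)
    exact ⟨C, (Finset.mem_filter.mp hCmem).2,
      fun C' h' => hm C' (Finset.mem_filter.mpr ⟨Finset.mem_univ _, h'⟩)⟩
  have beats : ∀ (C' : α → Finset α), IsPartitionFn C' → ∀ v, v ∈ V →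
      (∀ j, v ≤ U (C j) → U (C j) ≤ U (C' j)) →
      ∀ j0, U (C j0) < v → v ≤ U (C' j0) → False := by
    intro C' hC' v hv h1 j0 h2a h2b
    exact absurd (hmax C' hC')
      (not_le.mpr (key_lemma V (fun j => U (C j)) (fun j => U (C' j)) v hv h1 j0 h2a h2b))
  refine ⟨C, hC, ?_, ?_, ?_⟩
  · -- Pareto optimal
    rintro ⟨C', hC', hdom, j0, hstrict⟩
    exact beats C' hC' (U (C' j0)) (Finset.mem_image_of_mem U (Finset.mem_univ _))
      (fun j _ => hdom j) j0 hstrict le_rfl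
  · -- Core stable
    rintro ⟨S, hSne, hblock⟩
    set C' : α → Finset α := fun j => if j ∈ S then S else C j \ S with hC'def
    have e1 : ∀ j, j ∈ S → C' j = S := fun j hj => if_pos hj
    have e2 : ∀ j, j ∉ S → C' j = C j \ S := fun j hj => if_neg hj
    have hC' : IsPartitionFn C' := by
      constructor
      · intro j
        by_cases hjS : j ∈ S
        · rw [e1 j hjS]; exact hjS
        · rw [e2 j hjS, Finset.mem_sdiff]; exact ⟨hC.1 j, hjS⟩
      · intro x j hx
        by_cases hjS : j ∈ S
        · rw [e1 j hjS] at hx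
          rw [e1 x hx, e1 j hjS]
        · rw [e2 j hjS, Finset.mem_sdiff] at hx
          rw [e2 x hx.2, e2 j hjS, hC.2 x j hx.1]
    obtain ⟨j0, hj0⟩ := hSne
    apply beats C' hC' (U S) (Finset.mem_image_of_mem U (Finset.mem_univ S)) ?_ j0
      (hblock j0 hj0) ?_
    · intro j hj
      by_cases hjS : j ∈ S
      · exact absurd (hblock j hjS) (not_lt.mpr hj)
      · have hdisj : C j \ S = C j := by
          apply Finset.sdiff_eq_self_of_disjoint
          rw [Finset.disjoint_left]
          intro x hxC hxS
          have hCx := hC.2 x j hxC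
          have := hblock x hxS
          rw [hCx] at this
          exact absurd hj (not_le.mpr this)
        rw [e2 j hjS, hdisj]
    · rw [e1 j0 hj0]
  · -- Individually stable
    rintro ⟨i, T, hiT, hTcase, hlt⟩
    set C' : α → Finset α := fun j => if j ∈ insert i T then insert i T else C j \ {i}
      with hC'def
    have e1 : ∀ j, j ∈ insert i T → C' j = insert i T := fun j hj => if_pos hj
    have e2 : ∀ j, j ∉ insert i T → C' j = C j \ {i} := fun j hj => if_neg hj
    have hC' : IsPartitionFn C' := by
      constructor
      · intro j
        by_cases hjT : j ∈ insert i T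
        · rw [e1 j hjT]; exact hjT
        · have hjne : j ≠ i := fun h => hjT (h ▸ Finset.mem_insert_self i T)
          rw [e2 j hjT, Finset.mem_sdiff, Finset.mem_singleton]
          exact ⟨hC.1 j, hjne⟩
      · intro x j hx
        by_cases hjT : j ∈ insert i T
        · rw [e1 j hjT] at hx
          rw [e1 x hx, e1 j hjT]
        · rw [e2 j hjT, Finset.mem_sdiff, Finset.mem_singleton] at hx
          have hCx : C x = C j := hC.2 x j hx.1
          have hxT : x ∉ insert i T := by
            intro hxmem
            rcases Finset.mem_insert.mp hxmem with rfl | hxT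
            · exact hx.2 rfl
            · rcases hTcase with rfl | ⟨⟨k, hk⟩, _⟩
              · exact absurd hxT (Finset.notMem_empty x)
              · have hCxT : C x = T := by
                  rw [← hk]
                  exact hC.2 x k (hk ▸ hxT)
                have hjmem : j ∈ T := by
                  have := hC.1 j
                  rwa [← hCx, hCxT] at this
                exact hjT (Finset.mem_insert.mpr (Or.inr hjmem))
          rw [e2 x hxT, e2 j hjT, hCx]
    apply beats C' hC' (U (insert i T))
      (Finset.mem_image_of_mem U (Finset.mem_univ _)) ?_ i hlt ?_
    · intro j hj
      have hji : i ∉ C j := by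
        intro hiCj
        have := hC.2 i j hiCj
        rw [this] at hlt
        exact absurd hj (not_le.mpr hlt)
      by_cases hjT : j ∈ insert i T
      · have hjne : j ≠ i := by
          rintro rfl
          exact absurd hlt (not_lt.mpr hj)
        have hjT' : j ∈ T := (Finset.mem_insert.mp hjT).resolve_left hjne
        rcases hTcase with rfl | ⟨⟨k, hk⟩, hUT⟩
        · exact absurd hjT' (Finset.notMem_empty j)
        · have hCjT : C j = T := by
            rw [← hk]
            exact hC.2 j k (hk ▸ hjT')
          rw [hCjT, e1 j hjT]
          exact hUT
      · have hsd : C j \ {i} = C j := by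
          apply Finset.sdiff_eq_self_of_disjoint
          simp [Finset.disjoint_singleton_right, hji]
        rw [e2 j hjT, hsd]
    · rw [e1 i (Finset.mem_insert_self i T)]
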